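/- Let F be a field, L a loop and H a normal subloop of L. Then for q ∈ L one has 1 − q ∈ ωH if and only if q ∈ H. -/

import Mathlib

/-- A loop: a pointed magma with two-sided identity in which both division
equations `a * x = b` and `y * a = b` are uniquely solvable. -/
class MulLoop (L : Type*) extends MulOneClass L where
  existsUnique_left : ∀ a b : L, ∃! x : L, a * x = b
  existsUnique_right : ∀ a b : L, ∃! y : L, y * a = b

/-- A subloop of a loop: a subset containing `1` which is closed under
multiplication and under both (uniquely defined) divisions. -/
structure Subloop (L : Type*) [MulLoop L] where
  carrier : Set L
  one_mem : (1 : L) ∈ carrier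
  mul_mem : ∀ {a b : L}, a ∈ carrier → b ∈ carrier → a * b ∈ carrier
  ldiv_mem : ∀ {a b : L}, a ∈ carrier → b ∈ carrier → ∀ x : L, a * x = b → x ∈ carrier
  rdiv_mem : ∀ {a b : L}, a ∈ carrier → b ∈ carrier → ∀ y : L, y * a = b → y ∈ carrier

/-- A subloop `H` is normal when `xH = Hx`, `x(yH) = (xy)H` and `H(xy) = (Hx)y`. -/
def Subloop.IsNormal {L : Type*} [MulLoop L] (H : Subloop L) : Prop :=
  (∀ x : L, (fun h => x * h) '' H.carrier = (fun h => h * x) '' H.carrier) ∧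
  (∀ x y : L, (fun h => x * (y * h)) '' H.carrier = (fun h => (x * y) * h) '' H.carrier) ∧
  (∀ x y : L, (fun h => h * (x * y)) '' H.carrier = (fun h => (h * x) * y) '' H.carrier)

/-- `ωS`: the two-sided ideal of the (nonassociative) loop algebra `FL`
generated by the elements `1 - h`, `h ∈ S`. -/
noncomputable def omegaIdeal (F : Type*) [Field F] {L : Type*} [MulLoop L] (S : Set L) :
    TwoSidedIdeal (MonoidAlgebra F L) :=
  TwoSidedIdeal.span {x | ∃ h ∈ S, x = 1 - MonoidAlgebra.of F L h}

section Aux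

variable {L : Type} [MulLoop L] (H : Subloop L)

/-- The right-coset relation `x ∈ yH`. -/
def cosetRel (x y : L) : Prop := ∃ h ∈ H.carrier, x = y * h

variable {H}

lemma cosetRel.refl (x : L) : cosetRel H x x := ⟨1, H.one_mem, (mul_one x).symm⟩

lemma cosetRel.symm' (hH : H.IsNormal) {x y : L} (h : cosetRel H x y) : cosetRel H y x := by
  obtain ⟨h, hh, rfl⟩ := h
  -- y = y * (h * k) where h * k = 1, and y * (h * k) = (y * h) * k' for some k' ∈ H
  obtain ⟨k, hk1, -⟩ := MulLoop.existsUnique_left h 1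
  have hk : k ∈ H.carrier := H.ldiv_mem hh H.one_mem k hk1
  have : y * (h * k) ∈ (fun m => y * (h * m)) '' H.carrier := ⟨k, hk, rfl⟩
  rw [hH.2.1 y h] at this
  obtain ⟨m, hm, hme⟩ := this
  simp only [hk1, mul_one] at hme
  exact ⟨m, hm, hme.symm⟩

lemma cosetRel.trans' (hH : H.IsNormal) {x y z : L} (h1 : cosetRel H x y)
    (h2 : cosetRel H y z) : cosetRel H x z := by
  obtain ⟨h, hh, rfl⟩ := h1
  obtain ⟨g, hg, rfl⟩ := h2
  have : (z * g) * h ∈ (fun m => (z * g) * m) '' H.carrier := ⟨h, hh, rfl⟩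
  rw [← hH.2.1 z g] at this
  obtain ⟨m, hm, hme⟩ := this
  exact ⟨g * m, H.mul_mem hg hm, hme.symm⟩

lemma cosetRel.mul (hH : H.IsNormal) {x x' y y' : L} (hx : cosetRel H x x')
    (hy : cosetRel H y y') : cosetRel H (x * y) (x' * y') := by
  obtain ⟨h, hh, rfl⟩ := hx
  obtain ⟨g, hg, rfl⟩ := hy
  -- (x'*h) * (y'*g) : first reduce to x' * (y'*g), then to x'*y'
  -- step 1 : x' * (y' * g) = (x' * y') * k, k ∈ H
  have s1 : x' * (y' * g) ∈ (fun m => x' * (y' * m)) '' H.carrier := ⟨g, hg, rfl⟩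
  rw [hH.2.1 x' y'] at s1
  obtain ⟨k, hk, hke⟩ := s1
  -- step 2 : x' * h = h' * x'
  have s2 : x' * h ∈ (fun m => x' * m) '' H.carrier := ⟨h, hh, rfl⟩
  rw [hH.1 x'] at s2
  obtain ⟨h', hh', hh'e⟩ := s2
  -- step 3 : (h' * x') * (y' * g) = h'' * (x' * (y' * g))
  have s3 : (h' * x') * (y' * g) ∈ (fun m => (m * x') * (y' * g)) '' H.carrier :=
    ⟨h', hh', rfl⟩
  rw [← hH.2.2 x' (y' * g)] at s3
  obtain ⟨h'', hh'', hh''e⟩ := s3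
  -- step 4 : h'' * ((x'*y')*k) = ((x'*y')*k) * h''' via cond 1
  have s4 : h'' * (x' * (y' * g)) ∈ (fun m => m * (x' * (y' * g))) '' H.carrier :=
    ⟨h'', hh'', rfl⟩
  rw [← hH.1 (x' * (y' * g))] at s4
  obtain ⟨h''', hh''', hh'''e⟩ := s4
  -- assemble: (x'*h)*(y'*g) = (h'*x')*(y'*g) = h''*(x'*(y'*g)) = (x'*(y'*g))*h'''
  -- (x'*(y'*g)) * h''' = ((x'*y')*k) * h''' ; then cond2: ((x'*y')*k)*h''' = (x'*y')*(k*m)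
  have s5 : ((x' * y') * k) * h''' ∈ (fun m => ((x' * y') * k) * m) '' H.carrier :=
    ⟨h''', hh''', rfl⟩
  rw [← hH.2.1 (x' * y') k] at s5
  obtain ⟨m, hm, hme⟩ := s5
  refine ⟨k * m, H.mul_mem hk hm, ?_⟩
  calc (x' * h) * (y' * g) = (h' * x') * (y' * g) := by rw [← hh'e]
    _ = h'' * (x' * (y' * g)) := hh''e.symm
    _ = (x' * (y' * g)) * h''' := hh'''e.symm
    _ = ((x' * y') * k) * h''' := by rw [← hke]
    _ = (x' * y') * (k * m) := hme.symm

variable (H) in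
/-- The setoid of right cosets of a normal subloop. -/
def cosetSetoid (hH : H.IsNormal) : Setoid L where
  r := cosetRel H
  iseqv := ⟨cosetRel.refl, cosetRel.symm' hH, cosetRel.trans' hH⟩

end Aux

/-- Let `F` be a field, `L` a loop and `H` a normal subloop of
`L`. Then for `q ∈ L` one has `1 - q ∈ ωH` if and only if `q ∈ H`. -/
theorem stmt_1 {F : Type} [Field F] {L : Type} [MulLoop L]
    (H : Subloop L) (hH : H.IsNormal) (q : L) :
    (1 - MonoidAlgebra.of F L q) ∈ omegaIdeal F H.carrier ↔ q ∈ H.carrier := by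
  constructor
  · intro hmem
    -- build the quotient loop and the map-domain ring morphism, whose kernel
    -- is a two-sided ideal containing the generators
    letI s : Setoid L := cosetSetoid H hH
    set Q := Quotient s with hQ
    letI : Mul Q := ⟨Quotient.map₂ (· * ·) (fun _ _ hx _ _ hy => cosetRel.mul hH hx hy)⟩
    have hmul : ∀ x y : L, (⟦x⟧ : Q) * ⟦y⟧ = ⟦x * y⟧ := fun _ _ => rfl
    let π : L → Q := Quotient.mk s
    let φ' : MonoidAlgebra F L →+ MonoidAlgebra F Q :=
      (MonoidAlgebra.mapDomainNonUnitalRingHom F (⟨π, fun x y => rfl⟩ : L →ₙ* Q)).toAddMonoidHom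
    let φ : MonoidAlgebra F L → MonoidAlgebra F Q := MonoidAlgebra.mapDomain π
    have hφ' : ∀ x, φ' x = φ x := fun _ => rfl
    have hφ_mul : ∀ a b : MonoidAlgebra F L, φ (a * b) = φ a * φ b := by
      intro a b
      exact MonoidAlgebra.mapDomain_mul (⟨π, fun x y => rfl⟩ : L →ₙ* Q) a b
    let K : TwoSidedIdeal (MonoidAlgebra F L) :=
      TwoSidedIdeal.mk' {x | φ x = 0} (MonoidAlgebra.mapDomain_zero _)
        (fun {x y} hx hy => by
          simp only [Set.mem_setOf_eq] at *
          rw [← hφ', map_add, hφ', hφ', hx, hy, add_zero])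
        (fun {x} hx => by
          simp only [Set.mem_setOf_eq] at *
          rw [← hφ', map_neg, hφ', hx, neg_zero])
        (fun {x y} hy => by
          simp only [Set.mem_setOf_eq] at *
          rw [hφ_mul, hy, mul_zero])
        (fun {x y} hx => by
          simp only [Set.mem_setOf_eq] at *
          rw [hφ_mul, hx, zero_mul])
    have hsub : {x | ∃ h ∈ H.carrier, x = 1 - MonoidAlgebra.of F L h} ⊆ (K : Set _) := by
      rintro x ⟨h, hh, rfl⟩
      rw [SetLike.mem_coe, TwoSidedIdeal.mem_mk']
      show φ _ = 0
      have h1 : (⟦h⟧ : Q) = ⟦1⟧ := Quotient.sound ⟨h, hh, (one_mul h).symm⟩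
      have e : φ (1 - MonoidAlgebra.of F L h)
          = MonoidAlgebra.mapDomain π (MonoidAlgebra.single 1 1) - MonoidAlgebra.mapDomain π (MonoidAlgebra.single h 1) := by
        rw [← hφ', map_sub]; rfl
      rw [e, MonoidAlgebra.mapDomain_single, MonoidAlgebra.mapDomain_single]
      show MonoidAlgebra.single (⟦1⟧ : Q) (1 : F) - MonoidAlgebra.single ⟦h⟧ 1 = 0
      rw [h1, sub_self]
    have hK : (1 - MonoidAlgebra.of F L q) ∈ K :=
      TwoSidedIdeal.mem_span_iff.mp hmem K hsub
    rw [TwoSidedIdeal.mem_mk'] at hK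
    have hφq : φ (1 - MonoidAlgebra.of F L q) = 0 := hK
    have : MonoidAlgebra.single (⟦1⟧ : Q) (1 : F) - MonoidAlgebra.single ⟦q⟧ 1 = 0 := by
      have e : φ (1 - MonoidAlgebra.of F L q)
          = MonoidAlgebra.mapDomain π (MonoidAlgebra.single 1 1) - MonoidAlgebra.mapDomain π (MonoidAlgebra.single q 1) := by
        rw [← hφ', map_sub]; rfl
      rw [e, MonoidAlgebra.mapDomain_single, MonoidAlgebra.mapDomain_single] at hφq
      exact hφq
    have heq : (MonoidAlgebra.single (⟦1⟧ : Q) (1 : F)) = MonoidAlgebra.single ⟦q⟧ 1 := by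
      rwa [sub_eq_zero] at this
    have hq1 : (⟦1⟧ : Q) = ⟦q⟧ := by
      rcases MonoidAlgebra.single_inj.mp heq with ⟨h1, -⟩ | ⟨h1, -⟩
      · exact h1
      · exact absurd h1 one_ne_zero
    obtain ⟨h, hh, he⟩ := Quotient.exact hq1.symm
    rw [one_mul] at he
    rw [he]; exact hh
  · intro hq
    exact TwoSidedIdeal.subset_span ⟨q, hq, rfl⟩
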